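/- Let F₁,…,F_m be homogeneous elements of K[S_Δ^h] and < a multigraded monomial order. Then there exists a multidegree d ∈ ℕʳ and homogeneous elements G₁,…,G_t in ⟨F₁,…,F_m⟩ ∩ K[S_Δ^h]_d such that {χ(G₁),…,χ(G_t)} is a Gröbner basis of the ideal ⟨χ(F₁),…,χ(F_m)⟩ ⊆ K[S_Δ] with respect to the associated monomial order. -/

import Mathlib

theorem exists_finset_le_of_isPWO {α : Type*} [Preorder α] [DecidableEq α] {s : Set α}
    (h : s.IsPWO) :
    ∃ t : Finset α, (↑t ⊆ s) ∧ ∀ x ∈ s, ∃ y ∈ t, y ≤ x := by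
  by_contra hc
  push_neg at hc
  have key : ∀ t : Finset α, ↑t ⊆ s → ∃ x ∈ s, ∀ y ∈ t, ¬ y ≤ x := by
    intro t ht
    obtain ⟨x, hx, hx2⟩ := hc t ht
    exact ⟨x, hx, fun y hy hle => hx2 y hy hle⟩
  let T := {t : Finset α // ↑t ⊆ s}
  have pick : ∀ t : T, ∃ x, x ∈ s ∧ ∀ y ∈ t.1, ¬ y ≤ x := fun t => by
    obtain ⟨x, hx, h2⟩ := key t.1 t.2; exact ⟨x, hx, h2⟩
  choose x hxs hxle using pick
  let step : T → T := fun t => ⟨insert (x t) t.1, by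
    intro a ha
    rcases Finset.mem_insert.1 ha with rfl | ha
    · exact hxs t
    · exact t.2 ha⟩
  let seq : ℕ → T := fun n => step^[n] ⟨∅, by simp⟩
  have hsucc : ∀ q : ℕ, seq (q + 1) = step (seq q) := fun q =>
    Function.iterate_succ_apply' step q _
  have hmono : ∀ p q : ℕ, p ≤ q → (seq p).1 ⊆ (seq q).1 := by
    intro p q hpq
    induction q, hpq using Nat.le_induction with
    | base => exact Finset.Subset.refl _
    | succ q hq ih =>
      refine ih.trans ?_
      rw [hsucc q]
      show (seq q).1 ⊆ insert (x (seq q)) (seq q).1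
      exact Finset.subset_insert _ _
  have hmem : ∀ p q : ℕ, p < q → x (seq p) ∈ (seq q).1 := by
    intro p q hpq
    refine hmono (p + 1) q hpq ?_
    rw [hsucc p]
    show x (seq p) ∈ insert (x (seq p)) (seq p).1
    exact Finset.mem_insert_self _ _
  obtain ⟨p, q, hpq, hle⟩ := h (fun n => ⟨x (seq n), hxs _⟩)
  exact hxle (seq q) _ (hmem p q hpq) hle

/-- The dehomogenization morphism χ : K[S_Δ^h] → K[S_Δ], x^(α,d) ↦ x^α. -/
noncomputable def chi (K : Type) [Field K] (n r : ℕ) :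
    AddMonoidAlgebra K ((Fin n → ℤ) × (Fin r → ℕ)) →
      AddMonoidAlgebra K (Fin n → ℤ) :=
  fun x => AddMonoidAlgebra.ofCoeff (Finsupp.mapDomain Prod.fst x.coeff)

/-- given homogeneous F₁,…,F_m in the multigraded Cayley semigroup algebra
K[S_Δ^h] and a multigraded monomial order, there exists a multidegree d and homogeneous
elements G₁,…,G_t of degree d in the ideal ⟨F₁,…,F_m⟩ whose dehomogenizations form a
Gröbner basis of ⟨χ(F₁),…,χ(F_m)⟩ ⊆ K[S_Δ] for the associated order. -/
theorem stmt8 (K : Type) [Field K] (n r m : ℕ)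
    (S : AddSubmonoid ((Fin n → ℤ) × (Fin r → ℕ))) (hSfg : S.FG)
    (hS0 : ∀ i : Fin r, ((0 : Fin n → ℤ), Pi.single i 1) ∈ S)
    (lt : ((Fin n → ℤ) × (Fin r → ℕ)) → ((Fin n → ℤ) × (Fin r → ℕ)) → Prop)
    (ltΔ : (Fin n → ℤ) → (Fin n → ℤ) → Prop)
    (lth : (Fin r → ℕ) → (Fin r → ℕ) → Prop)
    (hmg : ∀ p q, lt p q ↔ (lth p.2 q.2 ∨ (p.2 = q.2 ∧ ltΔ p.1 q.1)))
    -- monomial order axioms on S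
    (htotal : ∀ a ∈ S, ∀ b ∈ S, a = b ∨ lt a b ∨ lt b a)
    (hirrefl : ∀ a, ¬ lt a a)
    (htrans : ∀ a b c, lt a b → lt b c → lt a c)
    (hmin : ∀ a ∈ S, a ≠ (0 : ((Fin n → ℤ) × (Fin r → ℕ))) → lt 0 a)
    (hadd : ∀ a ∈ S, ∀ b ∈ S, ∀ c ∈ S, lt a b → lt (a + c) (b + c))
    (F : Fin m → AddMonoidAlgebra K ((Fin n → ℤ) × (Fin r → ℕ)))
    (dF : Fin m → (Fin r → ℕ))
    (hFhom : ∀ i, ∀ p ∈ (F i).coeff.support, p.2 = dF i)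
    (hFS : ∀ i, ∀ p ∈ (F i).coeff.support, p ∈ S) :
    ∃ (d : Fin r → ℕ) (t : ℕ)
      (G : Fin t → AddMonoidAlgebra K ((Fin n → ℤ) × (Fin r → ℕ))),
      (∀ j, ∀ p ∈ (G j).coeff.support, p.2 = d) ∧
      (∀ j, ∀ p ∈ (G j).coeff.support, p ∈ S) ∧
      (∀ j, ∃ H : Fin m → AddMonoidAlgebra K ((Fin n → ℤ) × (Fin r → ℕ)),
        (∀ i, ∀ p ∈ (H i).coeff.support, p ∈ S) ∧ G j = ∑ i, H i * F i) ∧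
      -- Gröbner basis property of the dehomogenizations
      (∀ g : AddMonoidAlgebra K (Fin n → ℤ),
        (∃ h : Fin m → AddMonoidAlgebra K (Fin n → ℤ),
          (∀ i, ∀ a ∈ (h i).coeff.support, ∃ p ∈ S, Prod.fst p = a) ∧
          g = ∑ i, h i * chi K n r (F i)) →
        g ≠ 0 →
        ∀ mg, (mg ∈ g.coeff.support ∧ ∀ a ∈ g.coeff.support, a = mg ∨ ltΔ a mg) →
          ∃ (j : Fin t) (mj : Fin n → ℤ),
            (mj ∈ (chi K n r (G j)).coeff.support ∧
              ∀ a ∈ (chi K n r (G j)).coeff.support, a = mj ∨ ltΔ a mj) ∧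
            ∃ γ : Fin n → ℤ, (∃ p ∈ S, Prod.fst p = γ) ∧ mg = γ + mj) := by
  classical
  -- χ is multiplicative and additive
  have chi_mul : ∀ x y : AddMonoidAlgebra K ((Fin n → ℤ) × (Fin r → ℕ)),
      chi K n r (x * y) = chi K n r x * chi K n r y := fun x y =>
    AddMonoidAlgebra.mapDomain_mul
      (AddMonoidHom.fst (Fin n → ℤ) (Fin r → ℕ)) x y
  have chi_sum : ∀ (f : Fin m → AddMonoidAlgebra K ((Fin n → ℤ) × (Fin r → ℕ))),
      chi K n r (∑ i, f i) = ∑ i, chi K n r (f i) := fun f => by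
    classical
    show AddMonoidAlgebra.ofCoeff _ = _
    rw [AddMonoidAlgebra.coeff_sum, Finsupp.mapDomain_finset_sum, AddMonoidAlgebra.ofCoeff_sum]
    rfl
  -- all of ℕʳ sits over 0 in S
  have h0S : ∀ c : Fin r → ℕ, ((0 : Fin n → ℤ), c) ∈ S := by
    intro c
    have hrep : (((0 : Fin n → ℤ), c) : (Fin n → ℤ) × (Fin r → ℕ)) =
        ∑ l : Fin r, c l • (((0 : Fin n → ℤ), Pi.single l 1)) := by
      have h2 : ∀ l : Fin r, c l • (((0 : Fin n → ℤ), Pi.single l 1) :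
          (Fin n → ℤ) × (Fin r → ℕ)) = ((0 : Fin n → ℤ), Pi.single l (c l)) := by
        intro l
        ext : 1
        · simp
        · simp [← Pi.single_smul]
      simp only [h2]
      have hfst : (∑ x : Fin r, ((0 : Fin n → ℤ), Pi.single x (c x))).1 =
          ∑ x : Fin r, (0 : Fin n → ℤ) :=
        map_sum (AddMonoidHom.fst (Fin n → ℤ) (Fin r → ℕ)) _ Finset.univ
      ext : 1
      · rw [hfst]; simp
      · have hsnd : (∑ x : Fin r, ((0 : Fin n → ℤ), Pi.single x (c x))).2 =
            ∑ x : Fin r, Pi.single x (c x) :=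
          map_sum (AddMonoidHom.snd (Fin n → ℤ) (Fin r → ℕ)) _ Finset.univ
        rw [hsnd, Finset.univ_sum_single]
    rw [hrep]
    exact AddSubmonoid.sum_mem _ fun l _ => AddSubmonoid.nsmul_mem _ (hS0 l) _
  -- the projected monoid P and a finite generating set
  set π := AddMonoidHom.fst (Fin n → ℤ) (Fin r → ℕ) with hπ
  set P : AddSubmonoid (Fin n → ℤ) := S.map π with hP
  obtain ⟨T, hT⟩ := hSfg.map π
  set k := T.card with hk
  set v : Fin k → (Fin n → ℤ) := fun i => ((T.equivFin.symm i : T) : Fin n → ℤ) with hv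
  set Φ : (Fin k → ℕ) → (Fin n → ℤ) := fun c => ∑ i, (c i) • v i with hΦ
  have hΦadd : ∀ b c, Φ (b + c) = Φ b + Φ c := by
    intro b c
    funext l
    simp [hΦ, Finset.sum_apply, add_smul, add_mul, Finset.sum_add_distrib]
  have hΦmem : ∀ c, Φ c ∈ P := by
    intro c
    rw [hP, ← hT]
    exact AddSubmonoid.sum_mem _ fun i _ => AddSubmonoid.nsmul_mem _
      (AddSubmonoid.subset_closure (Finset.mem_coe.mpr (T.equivFin.symm i).2)) _
  have hΦsingle : ∀ j : Fin k, Φ (Pi.single j 1) = v j := by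
    intro j
    show ∑ i : Fin k, (Pi.single j 1 : Fin k → ℕ) i • v i = v j
    rw [Finset.sum_eq_single j]
    · simp
    · intro i _ hij
      simp [Pi.single_apply, hij]
    · intro hj
      exact absurd (Finset.mem_univ j) hj
  have hsurj : ∀ p ∈ P, ∃ c : Fin k → ℕ, Φ c = p := by
    intro p hp
    rw [hP, ← hT] at hp
    induction hp using AddSubmonoid.closure_induction with
    | mem x hx =>
        refine ⟨Pi.single (T.equivFin ⟨x, hx⟩) 1, ?_⟩
        rw [hΦsingle]
        simp [hv]
    | zero => exact ⟨0, by funext l; simp [hΦ, Finset.sum_apply]⟩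
    | add x y hx hy ihx ihy =>
        obtain ⟨c1, rfl⟩ := ihx
        obtain ⟨c2, rfl⟩ := ihy
        exact ⟨c1 + c2, hΦadd c1 c2⟩
  -- the set of leading monomials of ideal elements
  set A : Set (Fin n → ℤ) := {a | ∃ (g : AddMonoidAlgebra K (Fin n → ℤ))
      (h : Fin m → AddMonoidAlgebra K (Fin n → ℤ)),
      (∀ i, ∀ x ∈ (h i).coeff.support, ∃ p ∈ S, p.1 = x) ∧
      g = ∑ i, h i * chi K n r (F i) ∧
      a ∈ g.coeff.support ∧ ∀ x ∈ g.coeff.support, x = a ∨ ltΔ x a} with hA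
  have hsupp : ∀ (h : Fin m → AddMonoidAlgebra K (Fin n → ℤ)),
      (∀ i, ∀ x ∈ (h i).coeff.support, ∃ p ∈ S, p.1 = x) →
      ∀ x ∈ (∑ i, h i * chi K n r (F i)).coeff.support, ∃ p ∈ S, p.1 = x := by
    intro h hh x hx
    obtain ⟨i, -, hxi⟩ := Finsupp.mem_support_finset_sum x (by rwa [AddMonoidAlgebra.coeff_sum] at hx)
    have hxm := AddMonoidAlgebra.support_coeff_mul_subset (h i) (chi K n r (F i)) hxi
    obtain ⟨a, ha, b, hb, rfl⟩ := Finset.mem_add.1 hxm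
    obtain ⟨p, hpS, hp1⟩ := hh i a ha
    have hb' : b ∈ (F i).coeff.support.image Prod.fst := Finsupp.mapDomain_support hb
    obtain ⟨q, hq, rfl⟩ := Finset.mem_image.1 hb'
    exact ⟨p + q, S.add_mem hpS (hFS i q hq), by simp [hp1]⟩
  -- Dickson: finite dominating set for the pullback of A
  obtain ⟨t0, ht0B, ht0dom⟩ :=
    exists_finset_le_of_isPWO (Set.isPWO_of_wellQuasiOrderedLE
      {b : Fin k → ℕ | Φ b ∈ A})
  set t := t0.card with ht
  set b0 : Fin t → (Fin k → ℕ) := fun j => ((t0.equivFin.symm j : t0) : Fin k → ℕ) with hb0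
  have hb0A : ∀ j, Φ (b0 j) ∈ A := fun j => ht0B (t0.equivFin.symm j).2
  have hw : ∀ j : Fin t, ∃ (g : AddMonoidAlgebra K (Fin n → ℤ))
      (h : Fin m → AddMonoidAlgebra K (Fin n → ℤ)),
      (∀ i, ∀ x ∈ (h i).coeff.support, ∃ p ∈ S, p.1 = x) ∧
      g = ∑ i, h i * chi K n r (F i) ∧
      Φ (b0 j) ∈ g.coeff.support ∧ ∀ x ∈ g.coeff.support, x = Φ (b0 j) ∨ ltΔ x (Φ (b0 j)) :=
    fun j => hb0A j
  choose gW hW hWsup hWeq hWmem hWmax using hw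
  -- choose degree lifts for the supports of the hW
  have hδex : ∀ (j : Fin t) (i : Fin m) (α : Fin n → ℤ),
      ∃ q : Fin r → ℕ, α ∈ (hW j i).coeff.support → (α, q) ∈ S := by
    intro j i α
    by_cases hα : α ∈ (hW j i).coeff.support
    · obtain ⟨⟨p1, p2⟩, hpS, hp1⟩ := hWsup j i α hα
      simp only at hp1
      subst hp1
      exact ⟨p2, fun _ => hpS⟩
    · exact ⟨0, fun hmem => absurd hmem hα⟩
  choose δ hδ using hδex
  set d : Fin r → ℕ :=
    (∑ j : Fin t, ∑ i : Fin m, ∑ α ∈ (hW j i).coeff.support, δ j i α) + ∑ i : Fin m, dF i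
    with hd
  have hdF_le : ∀ i, dF i ≤ d :=
    fun i => (Finset.single_le_sum (fun i' _ => zero_le) (Finset.mem_univ i)).trans
      le_add_self
  have hδle : ∀ (j : Fin t) (i : Fin m) (α : Fin n → ℤ), α ∈ (hW j i).coeff.support →
      δ j i α + dF i ≤ d := by
    intro j i α hα
    refine add_le_add ?_ (Finset.single_le_sum (fun i' _ => zero_le) (Finset.mem_univ i))
    calc δ j i α ≤ ∑ α' ∈ (hW j i).coeff.support, δ j i α' :=
          Finset.single_le_sum (fun _ _ => zero_le) hα
      _ ≤ ∑ i' : Fin m, ∑ α' ∈ (hW j i').coeff.support, δ j i' α' :=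
          Finset.single_le_sum
            (f := fun i' : Fin m => ∑ α' ∈ (hW j i').coeff.support, δ j i' α')
            (fun _ _ => zero_le) (Finset.mem_univ i)
      _ ≤ ∑ j' : Fin t, ∑ i' : Fin m, ∑ α' ∈ (hW j' i').coeff.support, δ j' i' α' :=
          Finset.single_le_sum
            (f := fun j' : Fin t => ∑ i' : Fin m, ∑ α' ∈ (hW j' i').coeff.support, δ j' i' α')
            (fun _ _ => zero_le) (Finset.mem_univ j)
  have he : ∀ i : Fin m, (d - dF i) + dF i = d :=
    fun i => funext fun l => Nat.sub_add_cancel (hdF_le i l)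
  have hemem : ∀ (j : Fin t) (i : Fin m) (α : Fin n → ℤ), α ∈ (hW j i).coeff.support →
      ((α, d - dF i) : (Fin n → ℤ) × (Fin r → ℕ)) ∈ S := by
    intro j i α hα
    have h1 : ((α, δ j i α) : (Fin n → ℤ) × (Fin r → ℕ)) ∈ S := hδ j i α hα
    have h2 : (((0 : Fin n → ℤ), (d - dF i) - δ j i α) :
        (Fin n → ℤ) × (Fin r → ℕ)) ∈ S := h0S _
    have h3 := S.add_mem h1 h2
    have h4 : ((α, δ j i α) : (Fin n → ℤ) × (Fin r → ℕ)) +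
        ((0 : Fin n → ℤ), (d - dF i) - δ j i α) = (α, d - dF i) := by
      ext l
      · simp
      · have hle := hδle j i α hα l
        simp only [Pi.add_apply] at hle
        simp only [Prod.snd_add, Pi.add_apply, Pi.sub_apply]
        omega
    rwa [h4] at h3
  -- the homogeneous lifts
  set H : Fin t → Fin m → AddMonoidAlgebra K ((Fin n → ℤ) × (Fin r → ℕ)) :=
    fun j i => AddMonoidAlgebra.mapDomain (fun α => (α, d - dF i)) (hW j i) with hH
  have hHS : ∀ (j : Fin t) (i : Fin m), ∀ p ∈ (H j i).coeff.support, p ∈ S := by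
    intro j i p hp
    have := Finsupp.mapDomain_support hp
    obtain ⟨α, hα, rfl⟩ := Finset.mem_image.1 this
    exact hemem j i α hα
  have chiH : ∀ (j : Fin t) (i : Fin m), chi K n r (H j i) = hW j i := by
    intro j i
    show AddMonoidAlgebra.ofCoeff (Finsupp.mapDomain Prod.fst
      (Finsupp.mapDomain (fun α => (α, d - dF i)) (hW j i).coeff)) = hW j i
    rw [← Finsupp.mapDomain_comp]
    have hcomp : (Prod.fst ∘ fun α : Fin n → ℤ => ((α, d - dF i) :
        (Fin n → ℤ) × (Fin r → ℕ))) = id := rfl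
    rw [hcomp, Finsupp.mapDomain_id]
  refine ⟨d, t, fun j => ∑ i, H j i * F i, ?_, ?_, ?_, ?_⟩
  · -- multidegree d
    intro j p hp
    obtain ⟨i, -, hpi⟩ := Finsupp.mem_support_finset_sum p (by rwa [AddMonoidAlgebra.coeff_sum] at hp)
    have hpm := AddMonoidAlgebra.support_coeff_mul_subset (H j i) (F i) hpi
    obtain ⟨a, ha, b, hb, rfl⟩ := Finset.mem_add.1 hpm
    have := Finsupp.mapDomain_support ha
    obtain ⟨α, hα, rfl⟩ := Finset.mem_image.1 this
    have hb2 : b.2 = dF i := hFhom i b hb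
    show (d - dF i) + b.2 = d
    rw [hb2]
    exact he i
  · -- support in S
    intro j p hp
    obtain ⟨i, -, hpi⟩ := Finsupp.mem_support_finset_sum p (by rwa [AddMonoidAlgebra.coeff_sum] at hp)
    have hpm := AddMonoidAlgebra.support_coeff_mul_subset (H j i) (F i) hpi
    obtain ⟨a, ha, b, hb, rfl⟩ := Finset.mem_add.1 hpm
    exact S.add_mem (hHS j i a ha) (hFS i b hb)
  · -- membership in the ideal
    intro j
    exact ⟨H j, hHS j, rfl⟩
  · -- Gröbner basis property
    intro g hgid hg0 mg hmg
    obtain ⟨hmgmem, hmgmax⟩ := hmg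
    obtain ⟨h, hh, hgeq⟩ := hgid
    have hmgA : mg ∈ A := ⟨g, h, hh, hgeq, hmgmem, hmgmax⟩
    have hmgP : mg ∈ P := by
      obtain ⟨p, hpS, hp1⟩ := hsupp h hh mg (by rw [← hgeq]; exact hmgmem)
      exact ⟨p, hpS, hp1⟩
    obtain ⟨b, hb⟩ := hsurj mg hmgP
    have hbB : b ∈ {b : Fin k → ℕ | Φ b ∈ A} := by
      rw [Set.mem_setOf_eq, hb]; exact hmgA
    obtain ⟨y, hyt0, hyb⟩ := ht0dom b hbB
    set j := t0.equivFin ⟨y, hyt0⟩ with hj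
    have hjy : b0 j = y := by simp [hb0, hj]
    have hchiG : chi K n r (∑ i, H j i * F i) = gW j := by
      rw [chi_sum]
      simp only [chi_mul, chiH]
      exact (hWeq j).symm
    refine ⟨j, Φ (b0 j), ?_, ?_⟩
    · rw [hchiG]
      exact ⟨hWmem j, hWmax j⟩
    · refine ⟨Φ (b - y), ?_, ?_⟩
      · obtain ⟨p, hpS, hp1⟩ := hΦmem (b - y)
        exact ⟨p, hpS, hp1⟩
      · rw [hjy, ← hb]
        have hby : y + (b - y) = b := funext fun l => Nat.add_sub_cancel' (hyb l)
        conv_lhs => rw [← hby]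
        rw [hΦadd]
        exact add_comm _ _
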